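/- The mean size S̄_n = Σ_{i=0}^{n-1} W̄^i_n of the semantic tree of a uniformly random plane process tree of size n satisfies S̄_n ~ e · n!/2^(n-1) as n → ∞. -/

import Mathlib

open Filter

/-- The mean number `W̄^i_n` of nodes at level `n-i-1` of the semantic tree of a uniformly
random plane rooted tree of size `n`. -/
noncomputable def Wbar (n i : ℕ) : ℝ :=
  (2 ^ i * (Nat.factorial (2 * n - 2 * i - 1) : ℝ) * (Nat.factorial (n - 1) : ℝ)) /
      ((Nat.factorial (2 * n - i - 1) : ℝ) * (Nat.factorial (n - i - 1) : ℝ)) *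
    ((Nat.factorial n : ℝ) / (2 ^ (n - 1) * (Nat.factorial i : ℝ)))

/-- The mean size `S̄_n = Σ_{i=0}^{n-1} W̄^i_n` of the semantic tree. -/
noncomputable def Sbar (n : ℕ) : ℝ := ∑ i ∈ Finset.range n, Wbar n i

open Finset Nat in
/-- Cast of a descending factorial as a product of reals. -/
lemma cast_descFactorial_prod (m i : ℕ) (h : i ≤ m) :
    ((m.descFactorial i : ℕ) : ℝ) = ∏ k ∈ range i, ((m : ℝ) - k) := by
  rw [Nat.descFactorial_eq_prod_range]
  push_cast
  refine Finset.prod_congr rfl fun k hk => ?_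
  have hk' : k < i := Finset.mem_range.1 hk
  have : (k : ℕ) ≤ m := le_trans (le_of_lt hk') h
  push_cast [Nat.cast_sub this]
  ring

open Finset Nat in
lemma term_eq (n i : ℕ) (h : i < n) :
    Wbar n i = (∏ k ∈ range i, (2 * ((n : ℝ) - 1 - k) / (2 * (n : ℝ) - i - 1 - k))) /
        (i ! : ℝ) * ((n ! : ℝ) / 2 ^ (n - 1)) := by
  have h1 : ((n - 1 - i)! * (n - 1).descFactorial i : ℕ) = (n - 1)! :=
    Nat.factorial_mul_descFactorial (by omega)
  have h2 : ((2 * n - i - 1 - i)! * (2 * n - i - 1).descFactorial i : ℕ) = (2 * n - i - 1)! :=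
    Nat.factorial_mul_descFactorial (by omega)
  have e1 : n - i - 1 = n - 1 - i := by omega
  have e2 : 2 * n - 2 * i - 1 = 2 * n - i - 1 - i := by omega
  have c1 : (((n - 1).descFactorial i : ℕ) : ℝ) = ∏ k ∈ range i, (((n : ℕ) : ℝ) - 1 - k) := by
    rw [cast_descFactorial_prod (n - 1) i (by omega)]
    refine Finset.prod_congr rfl fun k hk => ?_
    have : (1 : ℕ) ≤ n := by omega
    push_cast [Nat.cast_sub this]
    ring
  have c2 : (((2 * n - i - 1).descFactorial i : ℕ) : ℝ) =
      ∏ k ∈ range i, (2 * ((n : ℕ) : ℝ) - i - 1 - k) := by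
    rw [cast_descFactorial_prod (2 * n - i - 1) i (by omega)]
    refine Finset.prod_congr rfl fun k hk => ?_
    have h1' : (i + 1 : ℕ) ≤ 2 * n := by omega
    have : ((2 * n - i - 1 : ℕ) : ℝ) = 2 * (n : ℝ) - i - 1 := by
      push_cast [Nat.cast_sub (show i + 1 ≤ 2 * n by omega), Nat.sub_sub]
      ring
    rw [this]
  -- positivity facts
  have hd2pos : (0 : ℝ) < ∏ k ∈ range i, (2 * ((n : ℕ) : ℝ) - i - 1 - k) := by
    refine Finset.prod_pos fun k hk => ?_
    have hk' : k < i := Finset.mem_range.1 hk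
    have hin : (i : ℝ) + 1 ≤ n := by exact_mod_cast h
    have hki : (k : ℝ) + 1 ≤ i := by exact_mod_cast hk'
    linarith
  have f1 : (0 : ℝ) < ((n - 1 - i)! : ℝ) := by exact_mod_cast Nat.factorial_pos _
  have f2 : (0 : ℝ) < ((2 * n - i - 1 - i)! : ℝ) := by exact_mod_cast Nat.factorial_pos _
  have fi : (0 : ℝ) < (i ! : ℝ) := by exact_mod_cast Nat.factorial_pos i
  have fn : (0 : ℝ) < (n ! : ℝ) := by exact_mod_cast Nat.factorial_pos n
  have hr1 : ((n - 1)! : ℝ) = ((n - 1 - i)! : ℝ) * (((n - 1).descFactorial i : ℕ) : ℝ) := by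
    exact_mod_cast congrArg (fun x => ((x : ℕ) : ℝ)) h1.symm
  have hr2 : ((2 * n - i - 1)! : ℝ) =
      ((2 * n - i - 1 - i)! : ℝ) * (((2 * n - i - 1).descFactorial i : ℕ) : ℝ) := by
    exact_mod_cast congrArg (fun x => ((x : ℕ) : ℝ)) h2.symm
  have hprod : ∏ k ∈ range i, (2 * ((n : ℝ) - 1 - k) / (2 * (n : ℝ) - i - 1 - k)) =
      (2 : ℝ) ^ i * (((n - 1).descFactorial i : ℕ) : ℝ) /
        (((2 * n - i - 1).descFactorial i : ℕ) : ℝ) := by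
    rw [c1, c2, Finset.prod_div_distrib, Finset.prod_mul_distrib, Finset.prod_const,
      Finset.card_range]
  rw [Wbar, e1, e2, hr1, hr2, hprod]
  have hd2ne : (((2 * n - i - 1).descFactorial i : ℕ) : ℝ) ≠ 0 := by
    rw [c2]; exact ne_of_gt hd2pos
  field_simp

open Finset Nat in
/-- The normalized summand. -/
noncomputable def F (n i : ℕ) : ℝ :=
  if i < n then (∏ k ∈ range i, (2 * ((n : ℝ) - 1 - k) / (2 * (n : ℝ) - i - 1 - k))) / (i ! : ℝ)
  else 0

open Finset Nat in
lemma F_bounds (n i : ℕ) : 0 ≤ F n i ∧ F n i ≤ 2 ^ i / (i ! : ℝ) := by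
  have fi : (0 : ℝ) < (i ! : ℝ) := by exact_mod_cast Nat.factorial_pos i
  unfold F
  split_ifs with h
  · have hin : (i : ℝ) + 1 ≤ n := by exact_mod_cast h
    have hfac : ∀ k ∈ range i, (0 : ℝ) ≤ 2 * ((n : ℝ) - 1 - k) / (2 * (n : ℝ) - i - 1 - k) := by
      intro k hk
      have hk' : (k : ℝ) + 1 ≤ i := by exact_mod_cast Finset.mem_range.1 hk
      have hnum : (0 : ℝ) ≤ 2 * ((n : ℝ) - 1 - k) := by linarith
      have hden : (0 : ℝ) < 2 * (n : ℝ) - i - 1 - k := by linarith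
      positivity
    constructor
    · exact div_nonneg (Finset.prod_nonneg hfac) fi.le
    · rw [div_le_div_iff_of_pos_right fi]  -- may not exist; fallback below
      calc (∏ k ∈ range i, (2 * ((n : ℝ) - 1 - k) / (2 * (n : ℝ) - i - 1 - k)))
          ≤ ∏ k ∈ range i, (2 : ℝ) := by
            refine Finset.prod_le_prod hfac fun k hk => ?_
            have hk' : (k : ℝ) + 1 ≤ i := by exact_mod_cast Finset.mem_range.1 hk
            have hden : (0 : ℝ) < 2 * (n : ℝ) - i - 1 - k := by linarith
            rw [div_le_iff₀ hden]
            linarith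
        _ = 2 ^ i := by rw [Finset.prod_const, Finset.card_range]
  · exact ⟨le_refl 0, by positivity⟩

open Finset Nat in
lemma F_tendsto (i : ℕ) : Tendsto (fun n => F n i) atTop (nhds (1 / (i ! : ℝ))) := by
  have key : ∀ k ∈ range i, Tendsto
      (fun n : ℕ => 2 * ((n : ℝ) - 1 - k) / (2 * (n : ℝ) - i - 1 - k)) atTop (nhds 1) := by
    intro k hk
    have h0 : Tendsto (fun n : ℕ => ((2 + 2 * (k : ℝ)) / n)) atTop (nhds 0) :=
      tendsto_const_div_atTop_nhds_zero_nat _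
    have h1 : Tendsto (fun n : ℕ => (((i : ℝ) + 1 + k) / n)) atTop (nhds 0) :=
      tendsto_const_div_atTop_nhds_zero_nat _
    have h2 : Tendsto (fun n : ℕ => (2 - (2 + 2 * (k : ℝ)) / n) / (2 - ((i : ℝ) + 1 + k) / n))
        atTop (nhds 1) := by
      have := ((tendsto_const_nhds (x := (2 : ℝ))).sub h0).div
        ((tendsto_const_nhds (x := (2 : ℝ))).sub h1) (by norm_num)
      simpa [Pi.div_def] using this
    refine h2.congr' ?_
    filter_upwards [eventually_ge_atTop 1] with n hn
    have hn' : (n : ℝ) ≠ 0 := by positivity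
    field_simp
    ring
  have hprod : Tendsto
      (fun n : ℕ => ∏ k ∈ range i, (2 * ((n : ℝ) - 1 - k) / (2 * (n : ℝ) - i - 1 - k)))
      atTop (nhds 1) := by
    have h := tendsto_finset_prod (ι := ℕ) (α := ℕ) (M := ℝ)
      (f := fun (k : ℕ) (n : ℕ) => 2 * ((n : ℝ) - 1 - (k : ℝ)) / (2 * (n : ℝ) - (i : ℝ) - 1 - (k : ℝ)))
      (a := fun _ : ℕ => (1 : ℝ)) (range i) key
    simpa using h
  have : Tendsto (fun n : ℕ =>
      (∏ k ∈ range i, (2 * ((n : ℝ) - 1 - k) / (2 * (n : ℝ) - i - 1 - k))) / (i ! : ℝ))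
      atTop (nhds (1 / (i ! : ℝ))) := hprod.div_const _
  refine this.congr' ?_
  filter_upwards [eventually_gt_atTop i] with n hn
  simp [F, hn]

open Finset Nat in
lemma exp_one_eq : Real.exp 1 = ∑' i : ℕ, 1 / (i ! : ℝ) := by
  rw [Real.exp_eq_exp_ℝ, NormedSpace.exp_eq_tsum_div]
  simp

open Finset Nat in
/-- `S̄_n ~ e · n!/2^(n-1)` as `n → ∞`. -/
theorem mean_size_asymptotics :
    Tendsto (fun n : ℕ =>
        Sbar n / (Real.exp 1 * (Nat.factorial n : ℝ) / 2 ^ (n - 1)))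
      atTop (nhds 1) := by
  have hexp : (0 : ℝ) < Real.exp 1 := Real.exp_pos 1
  have hT : Tendsto (fun n : ℕ => ∑' i, F n i) atTop (nhds (∑' i : ℕ, 1 / (i ! : ℝ))) := by
    apply tendsto_tsum_of_dominated_convergence
      (bound := fun i : ℕ => (2 : ℝ) ^ i / (i ! : ℝ))
      (Real.summable_pow_div_factorial 2) F_tendsto
    filter_upwards with n i
    have := F_bounds n i
    rw [Real.norm_eq_abs, abs_of_nonneg this.1]
    exact this.2
  rw [← exp_one_eq] at hT
  have hmain : Tendsto (fun n : ℕ => (∑' i, F n i) / Real.exp 1) atTop (nhds 1) := by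
    have := hT.div_const (Real.exp 1)
    rwa [div_self (ne_of_gt hexp)] at this
  refine hmain.congr' ?_
  filter_upwards [eventually_ge_atTop 1] with n hn
  have hfsum : ∑' i, F n i = ∑ i ∈ Finset.range n, F n i := by
    refine tsum_eq_sum fun i hi => ?_
    have : ¬ i < n := by simpa using hi
    simp [F, this]
  have hS : Sbar n = (∑' i, F n i) * ((n ! : ℝ) / 2 ^ (n - 1)) := by
    rw [hfsum, Sbar, Finset.sum_mul]
    refine Finset.sum_congr rfl fun i hi => ?_
    have hi' : i < n := Finset.mem_range.1 hi
    rw [term_eq n i hi']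
    simp [F, hi']
  have fn : (0 : ℝ) < (n ! : ℝ) := by exact_mod_cast Nat.factorial_pos n
  have h2 : (0 : ℝ) < (2 : ℝ) ^ (n - 1) := by positivity
  rw [hS]
  field_simp
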